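/- Let γ > 0 and let f be continuous on the closed horizontal strip S_[0,γ] = {z ∈ ℂ : 0 ≤ Im z ≤ γ} and analytic on its interior. Suppose that for some p with 1 ≤ p < ∞ one has sup_{b ∈ [0,γ]} (∫_ℝ |f(x+ib)|^p dx)^{1/p} < ∞. Then there exists a strictly increasing sequence (n_j) of natural numbers such that for every b ∈ [0,γ], lim_{j→∞} ∫_{-n_j}^{n_j} (f(x+ib) − f(x)) dx = 0. In particular, when p = 1, for every b ∈ [0,γ] one has ∫_ℝ f(x+ib) dx = ∫_ℝ f(x) dx. -/

import Mathlib

open MeasureTheory Filter Set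
open scoped Topology ENNReal

namespace ContourShiftAux

/-- Squeeze a complex sequence to zero via an `ℝ≥0∞` bound. -/
lemma tendsto_of_ennnorm_le {u : ℕ → ℂ} {B : ℕ → ℝ≥0∞}
    (hle : ∀ j, (‖u j‖₊ : ℝ≥0∞) ≤ B j) (hB : Tendsto B atTop (𝓝 0)) :
    Tendsto u atTop (𝓝 0) := by
  have h1 : Tendsto (fun j => (‖u j‖₊ : ℝ≥0∞)) atTop (𝓝 0) :=
    tendsto_of_tendsto_of_tendsto_of_le_of_le tendsto_const_nhds hB (fun j => zero_le) hle
  have h3 := (ENNReal.tendsto_toReal (a := 0) (by simp)).comp h1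
  have h2 : Tendsto (fun j => ‖u j‖) atTop (𝓝 0) := by
    simpa [Function.comp_def] using h3
  exact tendsto_zero_iff_norm_tendsto_zero.2 h2

/-- Set integrals of a function with finite total lintegral over a pairwise disjoint family
tend to zero. -/
lemma tail_tendsto_zero {s : ℕ → Set ℝ} (hm : ∀ n, MeasurableSet (s n))
    (hd : Pairwise (Function.onFun Disjoint s)) {v : ℝ → ℝ≥0∞} (hfin : ∫⁻ x, v x ≠ ∞) :
    Tendsto (fun n => ∫⁻ x in s n, v x) atTop (𝓝 0) := by
  refine ENNReal.tendsto_atTop_zero_of_tsum_ne_top (ne_top_of_le_ne_top hfin ?_)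
  rw [← lintegral_iUnion hm hd]
  exact setLIntegral_le_lintegral _ _

lemma pairwise_ico : Pairwise (Function.onFun Disjoint fun n : ℕ => Ico (n : ℝ) (n + 1)) := by
  intro m n hmn
  have key : ∀ k l : ℕ, k < l → Disjoint (Ico (k : ℝ) (k + 1)) (Ico (l : ℝ) (l + 1)) := by
    intro k l hkl
    rw [Set.Ico_disjoint_Ico]
    have h1 : (k : ℝ) + 1 ≤ l := by exact_mod_cast hkl
    calc min ((k : ℝ) + 1) ((l : ℝ) + 1) ≤ (k : ℝ) + 1 := min_le_left _ _
      _ ≤ (l : ℝ) := h1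
      _ ≤ max (k : ℝ) (l : ℝ) := le_max_right _ _
  rcases hmn.lt_or_gt with h | h
  · exact key m n h
  · exact (key n m h).symm

lemma pairwise_union_ioc :
    Pairwise (Function.onFun Disjoint fun n : ℕ =>
      Ioc (n : ℝ) (n + 1) ∪ Ioc (-((n : ℝ) + 1)) (-(n : ℝ))) := by
  intro m n hmn
  have key : ∀ k l : ℕ, k < l →
      Disjoint (Ioc (k : ℝ) (k + 1) ∪ Ioc (-((k : ℝ) + 1)) (-(k : ℝ)))
        (Ioc (l : ℝ) (l + 1) ∪ Ioc (-((l : ℝ) + 1)) (-(l : ℝ))) := by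
    intro k l hkl
    have h1 : (k : ℝ) + 1 ≤ l := by exact_mod_cast hkl
    have hk0 : (0 : ℝ) ≤ k := Nat.cast_nonneg k
    have hl0 : (0 : ℝ) ≤ l := Nat.cast_nonneg l
    refine Set.disjoint_union_left.2 ⟨Set.disjoint_union_right.2 ⟨?_, ?_⟩,
      Set.disjoint_union_right.2 ⟨?_, ?_⟩⟩
    · rw [Set.Ioc_disjoint_Ioc]
      calc min ((k : ℝ) + 1) ((l : ℝ) + 1) ≤ (k : ℝ) + 1 := min_le_left _ _
        _ ≤ (l : ℝ) := h1
        _ ≤ max (k : ℝ) (l : ℝ) := le_max_right _ _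
    · rw [Set.Ioc_disjoint_Ioc]
      calc min ((k : ℝ) + 1) (-(l : ℝ)) ≤ -(l : ℝ) := min_le_right _ _
        _ ≤ (k : ℝ) := le_trans (neg_nonpos.2 hl0) hk0
        _ ≤ max (k : ℝ) (-((l : ℝ) + 1)) := le_max_left _ _
    · rw [Set.Ioc_disjoint_Ioc]
      calc min (-(k : ℝ)) ((l : ℝ) + 1) ≤ -(k : ℝ) := min_le_left _ _
        _ ≤ (l : ℝ) := le_trans (neg_nonpos.2 hk0) hl0
        _ ≤ max (-((k : ℝ) + 1)) (l : ℝ) := le_max_right _ _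
    · rw [Set.Ioc_disjoint_Ioc]
      calc min (-(k : ℝ)) (-(l : ℝ)) ≤ -(l : ℝ) := min_le_right _ _
        _ ≤ -((k : ℝ) + 1) := by linarith
        _ ≤ max (-((k : ℝ) + 1)) (-((l : ℝ) + 1)) := le_max_left _ _
  rcases hmn.lt_or_gt with h | h
  · exact key m n h
  · exact (key n m h).symm

end ContourShiftAux

section Main

/-- Let `γ > 0` and let `f` be continuous on the closed horizontal strip
`S_[0,γ] = {z : 0 ≤ Im z ≤ γ}` and analytic on its interior. If for some `1 ≤ p < ∞` the
`Lᵖ`-norms of the restrictions of `f` to the horizontal lines `Im z = b`, `b ∈ [0,γ]`,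
are uniformly bounded, then there is a strictly increasing sequence `(n j)` of naturals
such that for every `b ∈ [0,γ]`,
`∫_{-n j}^{n j} (f (x + i b) - f x) dx → 0`. In particular, when `p = 1`, for every
`b ∈ [0,γ]` one has `∫_ℝ f (x + i b) dx = ∫_ℝ f x dx`. -/
theorem contour_shift_subsequence
    (γ : ℝ) (hγ : 0 < γ) (f : ℂ → ℂ)
    (hcont : ContinuousOn f {z : ℂ | 0 ≤ z.im ∧ z.im ≤ γ})
    (hdiff : DifferentiableOn ℂ f {z : ℂ | 0 < z.im ∧ z.im < γ})
    (p : ℝ) (hp : 1 ≤ p)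
    (hbound : ∃ C : ℝ≥0∞, C < ⊤ ∧ ∀ b ∈ Set.Icc (0:ℝ) γ,
      eLpNorm (fun x : ℝ => f (x + b * Complex.I)) (ENNReal.ofReal p) volume ≤ C) :
    ∃ n : ℕ → ℕ, StrictMono n ∧
      (∀ b ∈ Set.Icc (0:ℝ) γ,
        Tendsto (fun j : ℕ => ∫ x in (-(n j : ℝ))..(n j : ℝ),
          (f (x + b * Complex.I) - f x)) atTop (𝓝 0)) ∧
      (p = 1 → ∀ b ∈ Set.Icc (0:ℝ) γ,
        ∫ x : ℝ, f (x + b * Complex.I) = ∫ x : ℝ, f x) := by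
  obtain ⟨C, hCt, hC⟩ := hbound
  have hγ0 : (0:ℝ) ≤ γ := hγ.le
  have hp0 : (0:ℝ) < p := lt_of_lt_of_le one_pos hp
  have h1p : (0:ℝ) ≤ 1 - 1/p := by
    have : 1/p ≤ 1 := by rw [div_le_one hp0]; exact hp
    linarith
  have h1p0 : (0:ℝ) < 1/p := by positivity
  -- Tietze extension
  set S : Set ℂ := {z : ℂ | 0 ≤ z.im ∧ z.im ≤ γ} with hSdef
  have hSc : IsClosed S := by
    have : S = Complex.im ⁻¹' Icc 0 γ := rfl
    rw [this]
    exact isClosed_Icc.preimage Complex.continuous_im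
  obtain ⟨g0, hg0⟩ := ContinuousMap.exists_restrict_eq (X := ℂ) hSc ⟨S.restrict f, hcont.restrict⟩
  set g : ℂ → ℂ := (g0 : ℂ → ℂ) with hgdef
  have hgc : Continuous g := g0.continuous
  have hfg : ∀ z ∈ S, f z = g z := by
    intro z hz
    have := DFunLike.congr_fun hg0 ⟨z, hz⟩
    exact this.symm
  have hmem : ∀ (x c : ℝ), 0 ≤ c → c ≤ γ → (↑x + ↑c * Complex.I) ∈ S := by
    intro x c h1 h2
    have him : (↑x + ↑c * Complex.I).im = c := by simp
    exact ⟨by rw [him]; exact h1, by rw [him]; exact h2⟩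
  -- basic continuity facts
  have hglc : ∀ c : ℝ, Continuous fun x : ℝ => g (↑x + ↑c * Complex.I) :=
    fun c => hgc.comp (Complex.continuous_ofReal.add continuous_const)
  have hvertc : ∀ c : ℝ, Continuous fun y : ℝ => g (↑c + ↑y * Complex.I) :=
    fun c => hgc.comp (continuous_const.add (Complex.continuous_ofReal.mul continuous_const))
  have hΦc : Continuous fun z : ℝ × ℝ => (‖g (↑z.1 + ↑z.2 * Complex.I)‖₊ : ℝ≥0∞) ^ p :=
    ENNReal.continuous_rpow_const.comp (ENNReal.continuous_coe.comp
      (continuous_nnnorm.comp (hgc.comp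
        ((Complex.continuous_ofReal.comp continuous_fst).add
          ((Complex.continuous_ofReal.comp continuous_snd).mul continuous_const)))))
  -- Hölder-type inequality
  have hq1 : (1:ℝ≥0∞) ≤ ENNReal.ofReal p := ENNReal.one_le_ofReal.2 hp
  have hq0 : ENNReal.ofReal p ≠ 0 := (ENNReal.ofReal_pos.2 hp0).ne'
  have hqt : ENNReal.ofReal p ≠ ⊤ := ENNReal.ofReal_ne_top
  have hqr : (ENNReal.ofReal p).toReal = p := ENNReal.toReal_ofReal hp0.le
  have holder : ∀ (h : ℝ → ℂ), Continuous h → ∀ (s : Set ℝ), volume s ≠ ∞ →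
      ∫⁻ x in s, (‖h x‖₊ : ℝ≥0∞) ≤
        (∫⁻ x in s, (‖h x‖₊ : ℝ≥0∞) ^ p) ^ (1/p) * (volume s) ^ (1 - 1/p) := by
    intro h hh s hfin
    haveI : IsFiniteMeasure (volume.restrict s) :=
      ⟨by rwa [Measure.restrict_apply_univ, lt_top_iff_ne_top]⟩
    have h2 := eLpNorm_le_eLpNorm_mul_rpow_measure_univ (p := 1) (q := ENNReal.ofReal p)
      (μ := volume.restrict s) hq1 hh.aestronglyMeasurable
    rw [eLpNorm_one_eq_lintegral_enorm, eLpNorm_eq_lintegral_rpow_enorm_toReal hq0 hqt, hqr] at h2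
    simpa [Measure.restrict_apply_univ, enorm_eq_nnnorm] using h2
  -- uniform Lᵖ bound in ℝ≥0∞ form
  have htot : ∀ c : ℝ, 0 ≤ c → c ≤ γ →
      ∫⁻ x : ℝ, (‖g (↑x + ↑c * Complex.I)‖₊ : ℝ≥0∞) ^ p ≤ C ^ p := by
    intro c h1 h2
    have h3 := hC c ⟨h1, h2⟩
    have h4 : (fun x : ℝ => f (↑x + ↑c * Complex.I)) = fun x : ℝ => g (↑x + ↑c * Complex.I) :=
      funext fun x => hfg _ (hmem x c h1 h2)
    rw [h4] at h3
    rw [eLpNorm_eq_lintegral_rpow_enorm_toReal hq0 hqt, hqr, one_div] at h3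
    calc ∫⁻ x : ℝ, (‖g (↑x + ↑c * Complex.I)‖₊ : ℝ≥0∞) ^ p
        = ((∫⁻ x : ℝ, (‖g (↑x + ↑c * Complex.I)‖₊ : ℝ≥0∞) ^ p) ^ p⁻¹) ^ p :=
          (ENNReal.rpow_inv_rpow hp0.ne' _).symm
      _ ≤ C ^ p := ENNReal.rpow_le_rpow h3 hp0.le
  have hCp : C ^ p ≠ ∞ := ENNReal.rpow_ne_top_of_nonneg hp0.le hCt.ne
  -- the vertical lintegral G and Tonelli
  set G : ℝ → ℝ≥0∞ :=
    fun x => ∫⁻ t in Icc (0:ℝ) γ, (‖g (↑x + ↑t * Complex.I)‖₊ : ℝ≥0∞) ^ p with hGdef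
  have hGm : Measurable G := by
    exact Measurable.lintegral_prod_right' (f := fun z : ℝ × ℝ =>
      (‖g (↑z.1 + ↑z.2 * Complex.I)‖₊ : ℝ≥0∞) ^ p) hΦc.measurable
  have hGtot : ∫⁻ x : ℝ, G x ≤ ENNReal.ofReal γ * C ^ p := by
    have hswap := lintegral_lintegral_swap (μ := (volume : Measure ℝ))
      (ν := (volume : Measure ℝ).restrict (Icc (0:ℝ) γ))
      (f := fun x t => (‖g (↑x + ↑t * Complex.I)‖₊ : ℝ≥0∞) ^ p)
      hΦc.measurable.aemeasurable
    calc ∫⁻ x : ℝ, G x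
        = ∫⁻ t in Icc (0:ℝ) γ, ∫⁻ x : ℝ, (‖g (↑x + ↑t * Complex.I)‖₊ : ℝ≥0∞) ^ p := hswap
      _ ≤ ∫⁻ _t in Icc (0:ℝ) γ, C ^ p :=
          setLIntegral_mono' measurableSet_Icc fun t ht => htot t ht.1 ht.2
      _ = C ^ p * volume (Icc (0:ℝ) γ) := setLIntegral_const _ _
      _ = ENNReal.ofReal γ * C ^ p := by rw [Real.volume_Icc, sub_zero, mul_comm]
  have hMfin : ENNReal.ofReal γ * C ^ p ≠ ∞ := ENNReal.mul_ne_top ENNReal.ofReal_ne_top hCp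
  have hGfin : ∫⁻ x : ℝ, G x ≠ ∞ := ne_top_of_le_ne_top hMfin hGtot
  -- symmetrized function and its tails
  set Hf : ℝ → ℝ≥0∞ := fun x => G x + G (-x) with hHdef
  have hHtot : ∫⁻ x, Hf x ≠ ∞ := by
    rw [hHdef]
    rw [lintegral_add_left hGm]
    have hneg : ∫⁻ x : ℝ, G (-x) = ∫⁻ x, G x :=
      (Measure.measurePreserving_neg (volume : Measure ℝ)).lintegral_comp hGm
    rw [hneg]
    exact ENNReal.add_ne_top.2 ⟨hGfin, hGfin⟩
  have ha0 : Tendsto (fun n : ℕ => ∫⁻ x in Ico (n:ℝ) (n+1), Hf x) atTop (𝓝 0) :=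
    ContourShiftAux.tail_tendsto_zero (fun n => measurableSet_Ico)
      ContourShiftAux.pairwise_ico hHtot
  have hafin : ∀ n : ℕ, ∫⁻ x in Ico (n:ℝ) (n+1), Hf x ≠ ∞ :=
    fun n => ne_top_of_le_ne_top hHtot (setLIntegral_le_lintegral _ _)
  -- selection of good radii
  have hsel : ∀ n : ℕ, ∃ r : ℝ, r ∈ Ico (n:ℝ) (n+1) ∧
      Hf r ≤ 2 * (∫⁻ x in Ico (n:ℝ) (n+1), Hf x) + ((n:ℝ≥0∞)+1)⁻¹ := by
    intro n
    by_contra hcon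
    push_neg at hcon
    have h1 : (2 * (∫⁻ x in Ico (n:ℝ) (n+1), Hf x) + ((n:ℝ≥0∞)+1)⁻¹)
        * volume (Ico (n:ℝ) (n+1)) ≤ ∫⁻ x in Ico (n:ℝ) (n+1), Hf x := by
      rw [← setLIntegral_const]
      exact setLIntegral_mono' measurableSet_Ico fun r hr => (hcon r hr).le
    rw [Real.volume_Ico, show (n:ℝ)+1 - n = 1 by ring, ENNReal.ofReal_one, mul_one] at h1
    have hinv : ((n:ℝ≥0∞)+1)⁻¹ ≠ 0 := ENNReal.inv_ne_zero.2 (by simp)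
    have h2 : (∫⁻ x in Ico (n:ℝ) (n+1), Hf x) <
        2 * (∫⁻ x in Ico (n:ℝ) (n+1), Hf x) + ((n:ℝ≥0∞)+1)⁻¹ := by
      have h3 : (∫⁻ x in Ico (n:ℝ) (n+1), Hf x) <
          (∫⁻ x in Ico (n:ℝ) (n+1), Hf x) + ((∫⁻ x in Ico (n:ℝ) (n+1), Hf x) + ((n:ℝ≥0∞)+1)⁻¹) :=
        ENNReal.lt_add_right (hafin n) (fun h0 => hinv (add_eq_zero.1 h0).2)
      calc (∫⁻ x in Ico (n:ℝ) (n+1), Hf x) < _ := h3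
        _ = 2 * (∫⁻ x in Ico (n:ℝ) (n+1), Hf x) + ((n:ℝ≥0∞)+1)⁻¹ := by ring
    exact absurd h1 (not_le.2 h2)
  choose R hRmem hRle using hsel
  have hR0 : ∀ n : ℕ, (n:ℝ) ≤ R n := fun n => (hRmem n).1
  have hR1 : ∀ n : ℕ, R n < (n:ℝ) + 1 := fun n => (hRmem n).2
  have hRpos : ∀ n : ℕ, 0 ≤ R n := fun n => le_trans (Nat.cast_nonneg n) (hR0 n)
  -- the selection bound tends to zero
  have hε0 : Tendsto (fun n : ℕ => 2 * (∫⁻ x in Ico (n:ℝ) (n+1), Hf x) + ((n:ℝ≥0∞)+1)⁻¹)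
      atTop (𝓝 0) := by
    have h2 : Tendsto (fun n : ℕ => 2 * (∫⁻ x in Ico (n:ℝ) (n+1), Hf x)) atTop (𝓝 (2 * 0)) :=
      ENNReal.Tendsto.const_mul ha0 (Or.inr ENNReal.ofNat_ne_top)
    have h3 : Tendsto (fun n : ℕ => ((n:ℝ≥0∞)+1)⁻¹) atTop (𝓝 0) := by
      have h4 := ENNReal.tendsto_inv_nat_nhds_zero.comp (tendsto_add_atTop_nat 1)
      have h5 : (fun n : ℕ => (((n+1 : ℕ):ℝ≥0∞))⁻¹) = fun n : ℕ => ((n:ℝ≥0∞)+1)⁻¹ := by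
        funext n; push_cast; ring_nf
      rw [← h5]
      exact h4
    simpa using h2.add h3
  have hGR : ∀ n : ℕ, G (R n) ≤ 2 * (∫⁻ x in Ico (n:ℝ) (n+1), Hf x) + ((n:ℝ≥0∞)+1)⁻¹ :=
    fun n => le_trans (self_le_add_right _ _) (hRle n)
  have hGnR : ∀ n : ℕ, G (-(R n)) ≤ 2 * (∫⁻ x in Ico (n:ℝ) (n+1), Hf x) + ((n:ℝ≥0∞)+1)⁻¹ :=
    fun n => le_trans (le_add_self) (hRle n)
  -- tails of the horizontal Lᵖ integrals
  have hsm : ∀ n : ℕ, MeasurableSet (Ioc (n:ℝ) (n+1) ∪ Ioc (-((n:ℝ)+1)) (-(n:ℝ))) :=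
    fun n => measurableSet_Ioc.union measurableSet_Ioc
  have htail : ∀ c : ℝ, 0 ≤ c → c ≤ γ →
      Tendsto (fun n : ℕ => ∫⁻ x in Ioc (n:ℝ) (n+1) ∪ Ioc (-((n:ℝ)+1)) (-(n:ℝ)),
        (‖g (↑x + ↑c * Complex.I)‖₊ : ℝ≥0∞) ^ p) atTop (𝓝 0) :=
    fun c h1 h2 => ContourShiftAux.tail_tendsto_zero hsm ContourShiftAux.pairwise_union_ioc
      (ne_top_of_le_ne_top hCp (htot c h1 h2))
  have hvol : ∀ n : ℕ, volume (Ioc (n:ℝ) (n+1) ∪ Ioc (-((n:ℝ)+1)) (-(n:ℝ))) ≤ 2 := by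
    intro n
    refine le_trans (measure_union_le _ _) ?_
    rw [Real.volume_Ioc, Real.volume_Ioc, show (n:ℝ)+1 - n = 1 by ring,
      show -(n:ℝ) - (-((n:ℝ)+1)) = 1 by ring, ENNReal.ofReal_one]
    norm_num
  have hvolfin : ∀ n : ℕ, volume (Ioc (n:ℝ) (n+1) ∪ Ioc (-((n:ℝ)+1)) (-(n:ℝ))) ≠ ∞ :=
    fun n => ne_top_of_le_ne_top ENNReal.ofNat_ne_top (hvol n)
  have hKγ : (ENNReal.ofReal γ) ^ (1 - 1/p) ≠ ∞ :=
    ENNReal.rpow_ne_top_of_nonneg h1p ENNReal.ofReal_ne_top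
  have hK2 : ((2:ℝ≥0∞)) ^ (1 - 1/p) ≠ ∞ :=
    ENNReal.rpow_ne_top_of_nonneg h1p ENNReal.ofNat_ne_top
  -- main convergence statement for g
  have maing : ∀ b : ℝ, 0 ≤ b → b ≤ γ →
      Tendsto (fun j : ℕ => ∫ x in (-(j:ℝ))..(j:ℝ),
        (g (↑x + ↑b * Complex.I) - g (↑x + ↑(0:ℝ) * Complex.I))) atTop (𝓝 0) := by
    intro b hb0 hbγ
    -- Cauchy's theorem on the rectangle [-Rr, Rr] × [0, b]
    have hcauchy : ∀ Rr : ℝ, 0 ≤ Rr →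
        (∫ x in (-Rr)..Rr, (g (↑x + ↑b * Complex.I) - g (↑x + ↑(0:ℝ) * Complex.I))) =
          Complex.I • (∫ y in (0:ℝ)..b, g (↑Rr + ↑y * Complex.I)) -
            Complex.I • ∫ y in (0:ℝ)..b, g (↑(-Rr) + ↑y * Complex.I) := by
      intro Rr hRr
      have hkey := Complex.integral_boundary_rect_eq_zero_of_continuousOn_of_differentiableOn f
        (⟨-Rr, 0⟩ : ℂ) (⟨Rr, b⟩ : ℂ)
        (by
          refine hcont.mono ?_
          intro z hz
          rw [Complex.mem_reProdIm] at hz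
          have h6 := hz.2
          simp only [show ((⟨-Rr, 0⟩ : ℂ)).im = 0 from rfl,
            show ((⟨Rr, b⟩ : ℂ)).im = b from rfl, uIcc_of_le hb0] at h6
          exact ⟨h6.1, h6.2.trans hbγ⟩)
        (by
          refine hdiff.mono ?_
          intro z hz
          rw [Complex.mem_reProdIm] at hz
          have h6 := hz.2
          simp only [show ((⟨-Rr, 0⟩ : ℂ)).im = 0 from rfl,
            show ((⟨Rr, b⟩ : ℂ)).im = b from rfl, min_eq_left hb0, max_eq_right hb0] at h6
          exact ⟨h6.1, lt_of_lt_of_le h6.2 hbγ⟩)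
      simp only [show ((⟨-Rr, 0⟩ : ℂ)).im = 0 from rfl, show ((⟨Rr, b⟩ : ℂ)).im = b from rfl,
        show ((⟨-Rr, 0⟩ : ℂ)).re = -Rr from rfl, show ((⟨Rr, b⟩ : ℂ)).re = Rr from rfl] at hkey
      have c1 : (∫ x in (-Rr)..Rr, f (↑x + ↑(0:ℝ) * Complex.I)) =
          ∫ x in (-Rr)..Rr, g (↑x + ↑(0:ℝ) * Complex.I) :=
        intervalIntegral.integral_congr fun x _ => hfg _ (hmem x 0 le_rfl hγ0)
      have c2 : (∫ x in (-Rr)..Rr, f (↑x + ↑b * Complex.I)) =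
          ∫ x in (-Rr)..Rr, g (↑x + ↑b * Complex.I) :=
        intervalIntegral.integral_congr fun x _ => hfg _ (hmem x b hb0 hbγ)
      have c3 : (∫ y in (0:ℝ)..b, f (↑Rr + ↑y * Complex.I)) =
          ∫ y in (0:ℝ)..b, g (↑Rr + ↑y * Complex.I) := by
        refine intervalIntegral.integral_congr fun y hy => ?_
        rw [uIcc_of_le hb0] at hy
        exact hfg _ (hmem Rr y hy.1 (hy.2.trans hbγ))
      have c4 : (∫ y in (0:ℝ)..b, f (↑(-Rr) + ↑y * Complex.I)) =
          ∫ y in (0:ℝ)..b, g (↑(-Rr) + ↑y * Complex.I) := by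
        refine intervalIntegral.integral_congr fun y hy => ?_
        rw [uIcc_of_le hb0] at hy
        exact hfg _ (hmem (-Rr) y hy.1 (hy.2.trans hbγ))
      rw [c1, c2, c3, c4] at hkey
      rw [intervalIntegral.integral_sub ((hglc b).intervalIntegrable _ _)
        ((hglc 0).intervalIntegrable _ _)]
      simp only [smul_eq_mul] at hkey ⊢
      linear_combination -hkey
    -- vertical pieces
    have pieceV : ∀ c : ℕ → ℝ,
        (∀ j : ℕ, G (c j) ≤ 2 * (∫⁻ x in Ico (j:ℝ) (j+1), Hf x) + ((j:ℝ≥0∞)+1)⁻¹) →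
        Tendsto (fun j : ℕ => Complex.I • ∫ y in (0:ℝ)..b, g (↑(c j) + ↑y * Complex.I))
          atTop (𝓝 0) := by
      intro c hc
      apply ContourShiftAux.tendsto_of_ennnorm_le (B := fun j =>
        (2 * (∫⁻ x in Ico (j:ℝ) (j+1), Hf x) + ((j:ℝ≥0∞)+1)⁻¹) ^ (1/p)
          * (ENNReal.ofReal γ) ^ (1 - 1/p))
      · intro j
        have e1 : (‖Complex.I • ∫ y in (0:ℝ)..b, g (↑(c j) + ↑y * Complex.I)‖₊ : ℝ≥0∞)
            = (‖∫ y in (0:ℝ)..b, g (↑(c j) + ↑y * Complex.I)‖₊ : ℝ≥0∞) := by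
          rw [nnnorm_smul, Complex.nnnorm_I, one_mul]
        rw [e1, intervalIntegral.integral_of_le hb0]
        calc (‖∫ y in Ioc (0:ℝ) b, g (↑(c j) + ↑y * Complex.I) ∂volume‖₊ : ℝ≥0∞)
            ≤ ∫⁻ y in Ioc (0:ℝ) b, (‖g (↑(c j) + ↑y * Complex.I)‖₊ : ℝ≥0∞) :=
              enorm_integral_le_lintegral_enorm _
          _ ≤ ∫⁻ y in Icc (0:ℝ) γ, (‖g (↑(c j) + ↑y * Complex.I)‖₊ : ℝ≥0∞) :=
              lintegral_mono_set (fun y hy => ⟨hy.1.le, hy.2.trans hbγ⟩)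
          _ ≤ (∫⁻ y in Icc (0:ℝ) γ, (‖g (↑(c j) + ↑y * Complex.I)‖₊ : ℝ≥0∞) ^ p) ^ (1/p)
              * (volume (Icc (0:ℝ) γ)) ^ (1 - 1/p) :=
              holder _ (hvertc (c j)) _ (by rw [Real.volume_Icc]; exact ENNReal.ofReal_ne_top)
          _ ≤ (2 * (∫⁻ x in Ico (j:ℝ) (j+1), Hf x) + ((j:ℝ≥0∞)+1)⁻¹) ^ (1/p)
              * (ENNReal.ofReal γ) ^ (1 - 1/p) := by
              rw [Real.volume_Icc, sub_zero]
              exact mul_le_mul_left (ENNReal.rpow_le_rpow (hc j) h1p0.le) _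
      · have h6 := ENNReal.Tendsto.mul_const (hε0.ennrpow_const (1/p)) (Or.inr hKγ)
        have h7 : ((0:ℝ≥0∞) ^ (1/p)) * (ENNReal.ofReal γ) ^ (1-1/p) = 0 := by
          rw [ENNReal.zero_rpow_of_pos h1p0, zero_mul]
        rw [h7] at h6
        exact h6
    -- horizontal pieces
    have pieceH : ∀ lo hi : ℕ → ℝ, (∀ j, lo j ≤ hi j) →
        (∀ j : ℕ, Ioc (lo j) (hi j) ⊆ Ioc (j:ℝ) (j+1) ∪ Ioc (-((j:ℝ)+1)) (-(j:ℝ))) →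
        Tendsto (fun j : ℕ => ∫ x in (lo j)..(hi j),
          (g (↑x + ↑b * Complex.I) - g (↑x + ↑(0:ℝ) * Complex.I))) atTop (𝓝 0) := by
      intro lo hi hle hsub
      apply ContourShiftAux.tendsto_of_ennnorm_le (B := fun j =>
        (∫⁻ x in Ioc (j:ℝ) (j+1) ∪ Ioc (-((j:ℝ)+1)) (-(j:ℝ)),
            (‖g (↑x + ↑b * Complex.I)‖₊ : ℝ≥0∞) ^ p) ^ (1/p) * (2:ℝ≥0∞) ^ (1-1/p)
        + (∫⁻ x in Ioc (j:ℝ) (j+1) ∪ Ioc (-((j:ℝ)+1)) (-(j:ℝ)),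
            (‖g (↑x + ↑(0:ℝ) * Complex.I)‖₊ : ℝ≥0∞) ^ p) ^ (1/p) * (2:ℝ≥0∞) ^ (1-1/p))
      · intro j
        rw [intervalIntegral.integral_of_le (hle j)]
        calc (‖∫ x in Ioc (lo j) (hi j),
              (g (↑x + ↑b * Complex.I) - g (↑x + ↑(0:ℝ) * Complex.I)) ∂volume‖₊ : ℝ≥0∞)
            ≤ ∫⁻ x in Ioc (lo j) (hi j),
              (‖g (↑x + ↑b * Complex.I) - g (↑x + ↑(0:ℝ) * Complex.I)‖₊ : ℝ≥0∞) :=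
              enorm_integral_le_lintegral_enorm _
          _ ≤ ∫⁻ x in Ioc (j:ℝ) (j+1) ∪ Ioc (-((j:ℝ)+1)) (-(j:ℝ)),
              (‖g (↑x + ↑b * Complex.I) - g (↑x + ↑(0:ℝ) * Complex.I)‖₊ : ℝ≥0∞) :=
              lintegral_mono_set (hsub j)
          _ ≤ ∫⁻ x in Ioc (j:ℝ) (j+1) ∪ Ioc (-((j:ℝ)+1)) (-(j:ℝ)),
              ((‖g (↑x + ↑b * Complex.I)‖₊ : ℝ≥0∞) + (‖g (↑x + ↑(0:ℝ) * Complex.I)‖₊ : ℝ≥0∞)) :=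
              lintegral_mono (fun x => ENNReal.coe_le_coe.2 (nnnorm_sub_le _ _))
          _ = (∫⁻ x in Ioc (j:ℝ) (j+1) ∪ Ioc (-((j:ℝ)+1)) (-(j:ℝ)),
                (‖g (↑x + ↑b * Complex.I)‖₊ : ℝ≥0∞))
              + ∫⁻ x in Ioc (j:ℝ) (j+1) ∪ Ioc (-((j:ℝ)+1)) (-(j:ℝ)),
                (‖g (↑x + ↑(0:ℝ) * Complex.I)‖₊ : ℝ≥0∞) :=
              lintegral_add_left ((hglc b).measurable.enorm) _
          _ ≤ (∫⁻ x in Ioc (j:ℝ) (j+1) ∪ Ioc (-((j:ℝ)+1)) (-(j:ℝ)),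
                (‖g (↑x + ↑b * Complex.I)‖₊ : ℝ≥0∞) ^ p) ^ (1/p)
                  * (volume (Ioc (j:ℝ) (j+1) ∪ Ioc (-((j:ℝ)+1)) (-(j:ℝ)))) ^ (1-1/p)
              + (∫⁻ x in Ioc (j:ℝ) (j+1) ∪ Ioc (-((j:ℝ)+1)) (-(j:ℝ)),
                (‖g (↑x + ↑(0:ℝ) * Complex.I)‖₊ : ℝ≥0∞) ^ p) ^ (1/p)
                  * (volume (Ioc (j:ℝ) (j+1) ∪ Ioc (-((j:ℝ)+1)) (-(j:ℝ)))) ^ (1-1/p) :=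
              add_le_add (holder _ (hglc b) _ (hvolfin j)) (holder _ (hglc 0) _ (hvolfin j))
          _ ≤ _ := add_le_add
              (mul_le_mul_right (ENNReal.rpow_le_rpow (hvol j) h1p) _)
              (mul_le_mul_right (ENNReal.rpow_le_rpow (hvol j) h1p) _)
      · have hb' := htail b hb0 hbγ
        have h0' := htail 0 le_rfl hγ0
        have h7 := (ENNReal.Tendsto.mul_const (hb'.ennrpow_const (1/p)) (Or.inr hK2)).add
          (ENNReal.Tendsto.mul_const (h0'.ennrpow_const (1/p)) (Or.inr hK2))
        have h8 : ((0:ℝ≥0∞) ^ (1/p)) * (2:ℝ≥0∞) ^ (1-1/p)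
            + ((0:ℝ≥0∞) ^ (1/p)) * (2:ℝ≥0∞) ^ (1-1/p) = 0 := by
          rw [ENNReal.zero_rpow_of_pos h1p0, zero_mul, add_zero]
        rw [h8] at h7
        exact h7
    -- decomposition of the integral over [-j, j]
    have hdecomp : ∀ j : ℕ,
        (∫ x in (-(j:ℝ))..(j:ℝ), (g (↑x + ↑b * Complex.I) - g (↑x + ↑(0:ℝ) * Complex.I))) =
          (Complex.I • (∫ y in (0:ℝ)..b, g (↑(R j) + ↑y * Complex.I)) -
            Complex.I • (∫ y in (0:ℝ)..b, g (↑(-(R j)) + ↑y * Complex.I))) -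
          (∫ x in (-(R j))..(-(j:ℝ)), (g (↑x + ↑b * Complex.I) - g (↑x + ↑(0:ℝ) * Complex.I))) -
          (∫ x in ((j:ℝ))..(R j), (g (↑x + ↑b * Complex.I) - g (↑x + ↑(0:ℝ) * Complex.I))) := by
      intro j
      have hInt : ∀ a1 a2 : ℝ, IntervalIntegrable
          (fun x : ℝ => g (↑x + ↑b * Complex.I) - g (↑x + ↑(0:ℝ) * Complex.I)) volume a1 a2 :=
        fun a1 a2 => ((hglc b).sub (hglc 0)).intervalIntegrable _ _
      have h1 := intervalIntegral.integral_add_adjacent_intervals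
        (a := -(R j)) (b := -(j:ℝ)) (c := (j:ℝ))
        (f := fun x : ℝ => g (↑x + ↑b * Complex.I) - g (↑x + ↑(0:ℝ) * Complex.I))
        (μ := volume) (hInt _ _) (hInt _ _)
      have h2 := intervalIntegral.integral_add_adjacent_intervals
        (a := -(R j)) (b := (j:ℝ)) (c := R j)
        (f := fun x : ℝ => g (↑x + ↑b * Complex.I) - g (↑x + ↑(0:ℝ) * Complex.I))
        (μ := volume) (hInt _ _) (hInt _ _)
      have h3 := hcauchy (R j) (hRpos j)
      simp only [smul_eq_mul] at h3 ⊢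
      linear_combination h1 + h2 + h3
    have hT3 := pieceH (fun j => -(R j)) (fun j => -(j:ℝ))
      (fun j => neg_le_neg (hR0 j))
      (fun j x hx => Or.inr ⟨lt_trans (neg_lt_neg (hR1 j)) hx.1, hx.2⟩)
    have hT4 := pieceH (fun j => (j:ℝ)) (fun j => R j) (fun j => hR0 j)
      (fun j x hx => Or.inl ⟨hx.1, hx.2.trans (hR1 j).le⟩)
    have hV1 := pieceV (fun j => R j) hGR
    have hV2 := pieceV (fun j => -(R j)) (fun j => hGnR j)
    have hcomb := ((hV1.sub hV2).sub hT3).sub hT4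
    simp only [sub_zero] at hcomb
    exact hcomb.congr (fun j => (hdecomp j).symm)
  -- final assembly
  refine ⟨fun j => j, strictMono_id, ?_, ?_⟩
  · intro b hb
    have hfun : (fun j : ℕ => ∫ x in (-(j:ℝ))..(j:ℝ), (f (↑x + ↑b * Complex.I) - f ↑x)) =
        fun j : ℕ => ∫ x in (-(j:ℝ))..(j:ℝ),
          (g (↑x + ↑b * Complex.I) - g (↑x + ↑(0:ℝ) * Complex.I)) := by
      funext j
      refine intervalIntegral.integral_congr fun x _ => ?_
      have e0 : ((x:ℂ)) = ↑x + ↑(0:ℝ) * Complex.I := by simp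
      have hx0 : ((x:ℂ)) ∈ S := ⟨by simp, by simp [hγ0]⟩
      rw [hfg _ (hmem x b hb.1 hb.2),
        show f ↑x = g (↑x + ↑(0:ℝ) * Complex.I) from (hfg _ hx0).trans (congrArg g e0)]
    have h8 := maing b hb.1 hb.2
    rw [← hfun] at h8
    exact h8
  · intro hp1 b hb
    have hint : ∀ c : ℝ, 0 ≤ c → c ≤ γ →
        Integrable (fun x : ℝ => g (↑x + ↑c * Complex.I)) := by
      intro c h1 h2
      refine ⟨(hglc c).aestronglyMeasurable, ?_⟩
      show (∫⁻ a : ℝ, (‖g (↑a + ↑c * Complex.I)‖₊ : ℝ≥0∞)) < ∞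
      have h3 := htot c h1 h2
      rw [hp1] at h3
      simp only [ENNReal.rpow_one] at h3
      exact lt_of_le_of_lt h3 hCt
    have hup : Tendsto (fun j : ℕ => (j:ℝ)) atTop atTop := tendsto_natCast_atTop_atTop
    have hdn : Tendsto (fun j : ℕ => -(j:ℝ)) atTop atBot := tendsto_neg_atTop_atBot.comp hup
    have hIb := intervalIntegral_tendsto_integral (hint b hb.1 hb.2) hdn hup
    have hI0 := intervalIntegral_tendsto_integral (hint 0 le_rfl hγ0) hdn hup
    have hsub2 := hIb.sub hI0
    have heq2 : (fun j : ℕ => (∫ x in (-(j:ℝ))..(j:ℝ), g (↑x + ↑b * Complex.I)) -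
        ∫ x in (-(j:ℝ))..(j:ℝ), g (↑x + ↑(0:ℝ) * Complex.I)) =
        fun j : ℕ => ∫ x in (-(j:ℝ))..(j:ℝ),
          (g (↑x + ↑b * Complex.I) - g (↑x + ↑(0:ℝ) * Complex.I)) :=
      funext fun j => (intervalIntegral.integral_sub ((hglc b).intervalIntegrable _ _)
        ((hglc 0).intervalIntegrable _ _)).symm
    rw [heq2] at hsub2
    have hz := tendsto_nhds_unique hsub2 (maing b hb.1 hb.2)
    have e1 : (fun x : ℝ => f (↑x + ↑b * Complex.I)) = fun x : ℝ => g (↑x + ↑b * Complex.I) :=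
      funext fun x => hfg _ (hmem x b hb.1 hb.2)
    have e2 : (fun x : ℝ => f ↑x) = fun x : ℝ => g (↑x + ↑(0:ℝ) * Complex.I) :=
      funext fun x => (hfg _ ⟨by simp, by simp [hγ0]⟩).trans (congrArg g (by simp))
    calc ∫ x : ℝ, f (↑x + ↑b * Complex.I) = ∫ x : ℝ, g (↑x + ↑b * Complex.I) := by rw [e1]
      _ = ∫ x : ℝ, g (↑x + ↑(0:ℝ) * Complex.I) := sub_eq_zero.1 hz
      _ = ∫ x : ℝ, f ↑x := by rw [e2]

end Main
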